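/- There exist constants C₅ and C₇ with 0 < C₅ ≤ C₇, depending only on p, β, c and M (and not on G or v), such that for every G as in the context and every continuous, strictly positive, ℤ^p-periodic, normalized function v : ℝ^p → ℝ one has C₅ ≤ (L v)(x) ≤ C₇ for all x ∈ ℝ^p; in particular sup (L v) / inf (L v) ≤ C₇ / C₅. -/

import Mathlib

open MeasureTheory
open scoped RealInnerProductSpace

/-- The vector of `ℝ^p` with integer coordinates `k`. -/
def intVec (p : ℕ) (k : Fin p → ℤ) : EuclideanSpace ℝ (Fin p) := WithLp.toLp 2 (fun i => (k i : ℝ))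

/-- The unit cube `[0,1]^p` in `ℝ^p`. -/
def unitCube (p : ℕ) : Set (EuclideanSpace ℝ (Fin p)) :=
  {x | ∀ i, x i ∈ Set.Icc (0 : ℝ) 1}

/-- The twisted Gaussian kernel operator
`(L v)(x) = (β/(2π))^(p/2) ∫ exp(−(β/2)‖y−x‖²) exp(β⟨c,y−x⟩) G(x,y) v(y) dy`. -/
noncomputable def twistedKernelOp (p : ℕ) (β : ℝ) (c : EuclideanSpace ℝ (Fin p))
    (G : EuclideanSpace ℝ (Fin p) → EuclideanSpace ℝ (Fin p) → ℝ)
    (v : EuclideanSpace ℝ (Fin p) → ℝ) (x : EuclideanSpace ℝ (Fin p)) : ℝ :=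
  (β / (2 * Real.pi)) ^ ((p : ℝ) / 2) *
    ∫ y, Real.exp (-(β / 2) * ‖y - x‖ ^ 2) * Real.exp (β * ⟪c, y - x⟫) * G x y * v y

open scoped ENNReal

namespace Stmt5Aux

variable {p : ℕ}

lemma intVec_apply (k : Fin p → ℤ) (i : Fin p) : intVec p k i = (k i : ℝ) := rfl

lemma intVec_neg (k : Fin p → ℤ) : intVec p (-k) = -intVec p k := by
  ext i
  show ((-k i : ℤ) : ℝ) = (-(intVec p k)) i
  simp [intVec_apply]

lemma measurableSet_unitCube : MeasurableSet (unitCube p) := by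
  have : unitCube p = ⋂ i, (fun x : EuclideanSpace ℝ (Fin p) => x i) ⁻¹' Set.Icc 0 1 := by
    ext; simp [unitCube]
  rw [this]
  exact MeasurableSet.iInter fun i => (EuclideanSpace.proj (𝕜 := ℝ) i).continuous.measurable measurableSet_Icc

lemma volume_unitCube : volume (unitCube p) = 1 := by
  have h := (EuclideanSpace.volume_preserving_symm_measurableEquiv_toLp (Fin p)).symm
  rw [← h.measure_preimage measurableSet_unitCube.nullMeasurableSet]
  have e : ((MeasurableEquiv.toLp 2 (Fin p → ℝ)).symm.symm) ⁻¹' (unitCube p)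
      = Set.pi Set.univ fun _ => Set.Icc (0:ℝ) 1 := by
    ext x
    simp only [Set.mem_preimage, Set.mem_pi, Set.mem_univ, forall_true_left]
    rfl
  rw [e, volume_pi_pi]
  simp [Real.volume_Icc]

lemma norm_le_sqrt_of_mem_unitCube {x : EuclideanSpace ℝ (Fin p)} (hx : x ∈ unitCube p) :
    ‖x‖ ≤ Real.sqrt p := by
  rw [EuclideanSpace.norm_eq]
  apply Real.sqrt_le_sqrt
  simp only [Real.norm_eq_abs, sq_abs]
  calc ∑ i, x i ^ 2 ≤ ∑ _i : Fin p, (1:ℝ) := by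
        apply Finset.sum_le_sum
        intro i _
        have h := hx i
        nlinarith [h.1, h.2]
    _ = p := by simp

lemma normsq_le_of_abs_le {z : EuclideanSpace ℝ (Fin p)} (hz : ∀ i, |z i| ≤ 1) :
    ‖z‖ ^ 2 ≤ p := by
  rw [EuclideanSpace.norm_eq, Real.sq_sqrt (by positivity)]
  simp only [Real.norm_eq_abs, sq_abs]
  calc ∑ i, z i ^ 2 ≤ ∑ _i : Fin p, (1:ℝ) := by
        apply Finset.sum_le_sum
        intro i _
        have h := abs_le.mp (hz i)
        nlinarith [h.1, h.2]
    _ = p := by simp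

lemma isCompact_unitCube : IsCompact (unitCube p) := by
  apply Metric.isCompact_of_isClosed_isBounded
  · have : unitCube p = ⋂ i, (fun x : EuclideanSpace ℝ (Fin p) => x i) ⁻¹' Set.Icc 0 1 := by
      ext; simp [unitCube]
    rw [this]
    exact isClosed_iInter fun i => isClosed_Icc.preimage (EuclideanSpace.proj (𝕜 := ℝ) i).continuous
  · rw [Metric.isBounded_iff_subset_closedBall 0]
    exact ⟨Real.sqrt p, fun x hx => by
      simpa [Metric.mem_closedBall] using norm_le_sqrt_of_mem_unitCube hx⟩

lemma zero_mem_unitCube : (0 : EuclideanSpace ℝ (Fin p)) ∈ unitCube p := by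
  intro i
  constructor <;> norm_num [show (0 : EuclideanSpace ℝ (Fin p)) i = 0 from rfl]


variable {p : ℕ}

/-- The translated cube with integer corner `m`. -/
def cubeT (p : ℕ) (m : Fin p → ℤ) : Set (EuclideanSpace ℝ (Fin p)) :=
  (fun s : EuclideanSpace ℝ (Fin p) => s - intVec p m) ⁻¹' unitCube p

lemma mem_cubeT {m : Fin p → ℤ} {s : EuclideanSpace ℝ (Fin p)} :
    s ∈ cubeT p m ↔ ∀ i, s i - (m i : ℝ) ∈ Set.Icc (0:ℝ) 1 := by
  unfold cubeT unitCube
  simp only [Set.mem_preimage, Set.mem_setOf_eq]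
  constructor <;> intro h i <;> simpa [intVec_apply] using h i

/-- lintegral of a periodic function over a translated integer cube. -/
lemma setLIntegral_cubeT (f : EuclideanSpace ℝ (Fin p) → ℝ≥0∞)
    (hf : ∀ x (k : Fin p → ℤ), f (x + intVec p k) = f x) (m : Fin p → ℤ) :
    ∫⁻ s in cubeT p m, f s = ∫⁻ s in unitCube p, f s := by
  have h := (measurePreserving_sub_right (volume : Measure (EuclideanSpace ℝ (Fin p)))
      (intVec p m)).setLIntegral_comp_preimage_emb
      ((MeasurableEquiv.subRight (intVec p m)).measurableEmbedding) f (unitCube p)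
  rw [← h]
  unfold cubeT
  apply setLIntegral_congr_fun (measurableSet_unitCube.preimage (measurable_sub_const _))
  intro s _
  show f s = f (s - intVec p m)
  have : s - intVec p m = s + intVec p (-m) := by rw [intVec_neg]; abel
  rw [this, hf]

lemma setIntegral_cubeT (v : EuclideanSpace ℝ (Fin p) → ℝ)
    (hv : ∀ x (k : Fin p → ℤ), v (x + intVec p k) = v x) (m : Fin p → ℤ) :
    ∫ s in cubeT p m, v s = ∫ s in unitCube p, v s := by
  have h := (measurePreserving_sub_right (volume : Measure (EuclideanSpace ℝ (Fin p)))
      (intVec p m)).setIntegral_preimage_emb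
      ((MeasurableEquiv.subRight (intVec p m)).measurableEmbedding) v (unitCube p)
  rw [← h]
  unfold cubeT
  apply setIntegral_congr_fun
  · exact measurableSet_unitCube.preimage (measurable_sub_const _)
  · intro s _
    show v s = v (s - intVec p m)
    have : s - intVec p m = s + intVec p (-m) := by rw [intVec_neg]; abel
    rw [this, hv]


/-- Every point is a periodic translate of a point of the unit cube. -/
lemma exists_translate (x : EuclideanSpace ℝ (Fin p)) :
    ∃ (y : EuclideanSpace ℝ (Fin p)) (k : Fin p → ℤ),
      y ∈ unitCube p ∧ x = y + intVec p k := by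
  refine ⟨x - intVec p (fun i => ⌊x i⌋), fun i => ⌊x i⌋, ?_, by abel⟩
  intro i
  have h1 : (x - intVec p fun i => ⌊x i⌋) i = x i - (⌊x i⌋ : ℝ) := rfl
  rw [h1]
  constructor
  · linarith [Int.floor_le (x i)]
  · linarith [Int.lt_floor_add_one (x i)]

/-- A continuous periodic function is bounded. -/
lemma exists_bound {v : EuclideanSpace ℝ (Fin p) → ℝ} (hv : Continuous v)
    (hper : ∀ x (k : Fin p → ℤ), v (x + intVec p k) = v x) :
    ∃ Cv : ℝ, 0 ≤ Cv ∧ ∀ x, |v x| ≤ Cv := by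
  have hco : IsCompact (unitCube p) := isCompact_unitCube
  obtain ⟨z, hz, hmax⟩ := hco.exists_isMaxOn ⟨0, zero_mem_unitCube⟩
    ((continuous_abs.comp hv).continuousOn)
  refine ⟨|v z|, abs_nonneg _, fun x => ?_⟩
  obtain ⟨y, k, hy, rfl⟩ := exists_translate x
  rw [hper]
  exact hmax hy


lemma lintegral_unitCube_eq_one {v : EuclideanSpace ℝ (Fin p) → ℝ} (hv : Continuous v)
    (hpos : ∀ x, 0 ≤ v x) (hnorm : (∫ x in unitCube p, v x) = 1) :
    ∫⁻ y in unitCube p, ENNReal.ofReal (v y) = 1 := by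
  rw [← ofReal_integral_eq_lintegral_ofReal
    (hv.continuousOn.integrableOn_compact isCompact_unitCube)
    (Filter.Eventually.of_forall hpos), hnorm, ENNReal.ofReal_one]

/-- Covering estimate: the integral of the periodic `v` over any reflected-translated cube
is at most `2 ^ p`. -/
lemma cover_bound {v : EuclideanSpace ℝ (Fin p) → ℝ} (hv : Continuous v)
    (hpos : ∀ x, 0 ≤ v x)
    (hper : ∀ x (k : Fin p → ℤ), v (x + intVec p k) = v x)
    (hnorm : (∫ x in unitCube p, v x) = 1) (w : EuclideanSpace ℝ (Fin p)) :
    ∫⁻ t in unitCube p, ENNReal.ofReal (v (w - t)) ≤ 2 ^ p := by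
  classical
  -- change of variables t ↦ w - t
  have hmp : MeasurePreserving (fun t : EuclideanSpace ℝ (Fin p) => w - t) volume volume := by
    have h1 : MeasurePreserving (fun t : EuclideanSpace ℝ (Fin p) => -t) volume volume :=
      Measure.measurePreserving_neg _
    have h2 : MeasurePreserving (fun t : EuclideanSpace ℝ (Fin p) => w + t) volume volume :=
      measurePreserving_add_left _ _
    have := h2.comp h1
    simpa [Function.comp_def, sub_eq_add_neg] using this
  set φ : EuclideanSpace ℝ (Fin p) → EuclideanSpace ℝ (Fin p) := fun t => w - t with hφ
  set X : Set (EuclideanSpace ℝ (Fin p)) := φ ⁻¹' unitCube p with hX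
  have hXmeas : MeasurableSet X := measurableSet_unitCube.preimage hmp.measurable
  have hchg : ∫⁻ t in unitCube p, ENNReal.ofReal (v (w - t))
      = ∫⁻ s in X, ENNReal.ofReal (v s) := by
    have h := hmp.setLIntegral_comp_preimage_emb
      ((MeasurableEquiv.subLeft w).measurableEmbedding)
      (fun s => ENNReal.ofReal (v s)) X
    have hpre : φ ⁻¹' X = unitCube p := by
      ext t
      simp only [hX, Set.mem_preimage, hφ, sub_sub_cancel]
    rw [hpre] at h
    exact h
  rw [hchg]
  -- cover X by 2^p integer cubes
  set m : (Fin p → Bool) → (Fin p → ℤ) := fun ε i => ⌈w i⌉ - 2 + (if ε i then 1 else 0) with hm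
  have hsub : X ⊆ ⋃ ε : Fin p → Bool, cubeT p (m ε) := by
    intro s hs
    have hs' : ∀ i, w i - 1 ≤ s i ∧ s i ≤ w i := by
      intro i
      have h : (w - s) i ∈ Set.Icc (0:ℝ) 1 := hs i
      have hcoord : (w - s) i = w i - s i := rfl
      rw [hcoord, Set.mem_Icc] at h
      constructor <;> linarith [h.1, h.2]
    refine Set.mem_iUnion.2 ⟨fun i => decide ((⌈w i⌉ : ℝ) - 1 < s i), ?_⟩
    rw [mem_cubeT]
    intro i
    have h1 := (hs' i).1
    have h2 := (hs' i).2
    have hceil1 : w i ≤ (⌈w i⌉ : ℝ) := Int.le_ceil _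
    have hceil2 : ((⌈w i⌉ : ℝ)) < w i + 1 := Int.ceil_lt_add_one _
    by_cases hc : (⌈w i⌉ : ℝ) - 1 < s i
    · rw [Set.mem_Icc]
      simp only [hm, decide_eq_true_eq, hc, if_true]
      push_cast
      constructor <;> linarith
    · rw [Set.mem_Icc]
      simp only [hm, decide_eq_true_eq, hc, if_false]
      push_cast
      constructor <;> [linarith; linarith [not_lt.mp hc]]
  calc ∫⁻ s in X, ENNReal.ofReal (v s)
      ≤ ∫⁻ s in ⋃ ε : Fin p → Bool, cubeT p (m ε), ENNReal.ofReal (v s) :=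
        lintegral_mono_set hsub
    _ ≤ ∑' ε : Fin p → Bool, ∫⁻ s in cubeT p (m ε), ENNReal.ofReal (v s) :=
        lintegral_iUnion_le _ _
    _ = ∑' _ε : Fin p → Bool, (1 : ℝ≥0∞) := by
        congr 1
        funext ε
        rw [setLIntegral_cubeT _ (fun x k => by rw [hper]) (m ε),
          lintegral_unitCube_eq_one hv hpos hnorm]
    _ = 2 ^ p := by
        rw [tsum_fintype]
        simp [Finset.sum_const, Finset.card_univ]

lemma gauss_base_integrable {b : ℝ} (hb : 0 < b) :
    Integrable (fun y : EuclideanSpace ℝ (Fin p) => Real.exp (-b * ‖y‖ ^ 2)) := by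
  have h := (GaussianFourier.integrable_cexp_neg_mul_sq_norm_add
    (V := EuclideanSpace ℝ (Fin p)) (b := (b : ℂ)) (by simpa using hb) 0
    (0 : EuclideanSpace ℝ (Fin p))).norm
  apply h.congr
  apply Filter.Eventually.of_forall
  intro y
  show ‖Complex.exp _‖ = _
  rw [Complex.norm_exp]
  norm_num
  left
  norm_cast

lemma gauss_integrable {b : ℝ} (hb : 0 < b) (a : EuclideanSpace ℝ (Fin p)) :
    Integrable (fun y : EuclideanSpace ℝ (Fin p) => Real.exp (-b * ‖y - a‖ ^ 2)) := by
  have h := ((measurePreserving_sub_right (volume : Measure (EuclideanSpace ℝ (Fin p)))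
    a).integrable_comp_emb ((MeasurableEquiv.subRight a).measurableEmbedding)
    (g := fun y : EuclideanSpace ℝ (Fin p) => Real.exp (-b * ‖y‖ ^ 2))).mpr
    (gauss_base_integrable hb)
  exact h

lemma gauss_integral {b : ℝ} (hb : 0 < b) (a : EuclideanSpace ℝ (Fin p)) :
    ∫ y : EuclideanSpace ℝ (Fin p), Real.exp (-b * ‖y - a‖ ^ 2)
      = (Real.pi / b) ^ ((p : ℝ) / 2) := by
  have h := (measurePreserving_sub_right (volume : Measure (EuclideanSpace ℝ (Fin p)))
    a).integral_comp ((MeasurableEquiv.subRight a).measurableEmbedding)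
    (fun y : EuclideanSpace ℝ (Fin p) => Real.exp (-b * ‖y‖ ^ 2))
  rw [show (fun y : EuclideanSpace ℝ (Fin p) => Real.exp (-b * ‖y - a‖ ^ 2))
    = fun y => Real.exp (-b * ‖(fun t => t - a) y‖ ^ 2) from rfl]
  rw [h, GaussianFourier.integral_rexp_neg_mul_sq_norm hb]
  norm_num [finrank_euclideanSpace_fin]

lemma gauss_lintegral {b : ℝ} (hb : 0 < b) (a : EuclideanSpace ℝ (Fin p)) :
    ∫⁻ y : EuclideanSpace ℝ (Fin p), ENNReal.ofReal (Real.exp (-b * ‖y - a‖ ^ 2))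
      = ENNReal.ofReal ((Real.pi / b) ^ ((p : ℝ) / 2)) := by
  rw [← ofReal_integral_eq_lintegral_ofReal (gauss_integrable hb a)
    (Filter.Eventually.of_forall fun y => (Real.exp_pos _).le), gauss_integral hb a]

lemma smooth_bound {β : ℝ} (hβ : 0 < β) (a y t : EuclideanSpace ℝ (Fin p))
    (ht : t ∈ unitCube p) :
    Real.exp (-(β / 2) * ‖y - a‖ ^ 2)
      ≤ Real.exp (β * p / 2) * Real.exp (-(β / 4) * ‖y + t - a‖ ^ 2) := by
  rw [← Real.exp_add, Real.exp_le_exp]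
  have htn : ‖t‖ ≤ Real.sqrt p := norm_le_sqrt_of_mem_unitCube ht
  have h1 : ‖y + t - a‖ ≤ ‖y - a‖ + ‖t‖ := by
    have : y + t - a = (y - a) + t := by abel
    rw [this]; exact norm_add_le _ _
  have h2 : ‖y + t - a‖ ≤ ‖y - a‖ + Real.sqrt p := le_trans h1 (by linarith)
  have h3 : ‖y + t - a‖ ^ 2 ≤ (‖y - a‖ + Real.sqrt p) ^ 2 := by
    apply sq_le_sq' <;> nlinarith [norm_nonneg (y + t - a), norm_nonneg (y - a),
      Real.sqrt_nonneg (p : ℝ)]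
  have hp : Real.sqrt p ^ 2 = p := Real.sq_sqrt (by positivity)
  nlinarith [sq_nonneg (‖y - a‖ - Real.sqrt p), hβ.le]

lemma isCompact_cubeT (m : Fin p → ℤ) : IsCompact (cubeT p m) := by
  have : cubeT p m = (fun s : EuclideanSpace ℝ (Fin p) => s + intVec p m) '' unitCube p := by
    ext s
    rw [mem_cubeT]
    constructor
    · intro h
      refine ⟨s - intVec p m, fun i => by simpa [intVec_apply] using h i, ?_⟩
      exact sub_add_cancel (G := EuclideanSpace ℝ (Fin p)) s (intVec p m)
    · rintro ⟨u, hu, rfl⟩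
      intro i
      have : (u + intVec p m) i - (m i : ℝ) = u i := by
        show u i + (m i : ℝ) - (m i : ℝ) = u i; ring
      rw [this]; exact hu i
  rw [this]
  exact isCompact_unitCube.image (continuous_id.add continuous_const)

lemma measurableSet_cubeT (m : Fin p → ℤ) : MeasurableSet (cubeT p m) :=
  measurableSet_unitCube.preimage (measurable_sub_const _)

lemma smooth_bound' {β : ℝ} (hβ : 0 < β) (a y t : EuclideanSpace ℝ (Fin p))
    (ht : t ∈ unitCube p) :
    Real.exp (-(β * p / 2)) * Real.exp (-(β / 2) * ‖y - a‖ ^ 2)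
      ≤ Real.exp (-(β / 4) * ‖y + t - a‖ ^ 2) := by
  rw [← Real.exp_add, Real.exp_le_exp]
  have htn : ‖t‖ ≤ Real.sqrt p := norm_le_sqrt_of_mem_unitCube ht
  have h1 : ‖y + t - a‖ ≤ ‖y - a‖ + ‖t‖ := by
    have h : y + t - a = (y - a) + t := by abel
    rw [h]; exact norm_add_le _ _
  have h3 : ‖y + t - a‖ ^ 2 ≤ (‖y - a‖ + Real.sqrt p) ^ 2 := by
    apply sq_le_sq' <;> nlinarith [norm_nonneg (y + t - a), norm_nonneg (y - a),
      Real.sqrt_nonneg (p : ℝ), norm_nonneg t]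
  have hp : Real.sqrt p ^ 2 = p := Real.sq_sqrt (by positivity)
  nlinarith [sq_nonneg (‖y - a‖ - Real.sqrt p), hβ.le]

set_option maxHeartbeats 1000000 in
/-- Core two-sided bound for the recentred integral. -/
lemma core_bound (p : ℕ) (β : ℝ) (hβ : 0 < β)
    (M : ℝ)
    (G : EuclideanSpace ℝ (Fin p) → EuclideanSpace ℝ (Fin p) → ℝ)
    (hGmeas : Measurable (Function.uncurry G))
    (hGbd : ∀ x y, Real.exp (-M) ≤ G x y ∧ G x y ≤ Real.exp M)
    (v : EuclideanSpace ℝ (Fin p) → ℝ) (hv : Continuous v) (hvpos : ∀ x, 0 < v x)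
    (hvper : ∀ x (k : Fin p → ℤ), v (x + intVec p k) = v x)
    (hvnorm : (∫ x in unitCube p, v x) = 1)
    (x a : EuclideanSpace ℝ (Fin p)) :
    Real.exp (-(β * p / 2)) * Real.exp (-M)
        ≤ (∫ y, Real.exp (-(β / 2) * ‖y - a‖ ^ 2) * (G x y * v y)) ∧
      (∫ y, Real.exp (-(β / 2) * ‖y - a‖ ^ 2) * (G x y * v y))
        ≤ Real.exp M * (Real.exp (β * p / 2)
            * (2 ^ p * (Real.pi / (β / 4)) ^ ((p : ℝ) / 2))) := by
  obtain ⟨Cv, hCv0, hCvb⟩ := exists_bound hv hvper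
  have hGx : Measurable (fun y => G x y) := hGmeas.comp measurable_prodMk_left
  have hq : Continuous (fun y : EuclideanSpace ℝ (Fin p) =>
      Real.exp (-(β / 2) * ‖y - a‖ ^ 2)) :=
    (continuous_const.mul (((continuous_id.sub continuous_const).norm.pow 2))).rexp
  set h : EuclideanSpace ℝ (Fin p) → ℝ :=
    fun y => Real.exp (-(β / 2) * ‖y - a‖ ^ 2) * (G x y * v y) with hh
  have hmeas : Measurable h := hq.measurable.mul (hGx.mul hv.measurable)
  have hGpos : ∀ y, 0 < G x y := fun y => lt_of_lt_of_le (Real.exp_pos _) (hGbd x y).1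
  have hnonneg : ∀ y, 0 ≤ h y := fun y =>
    mul_nonneg (Real.exp_pos _).le (mul_nonneg (hGpos y).le (hvpos y).le)
  have hint : Integrable h := by
    apply Integrable.mono' ((gauss_integrable (half_pos hβ) a).const_mul (Real.exp M * Cv))
      hmeas.aestronglyMeasurable
    apply Filter.Eventually.of_forall
    intro y
    rw [Real.norm_eq_abs, abs_of_nonneg (hnonneg y)]
    have hhy : h y = Real.exp (-(β / 2) * ‖y - a‖ ^ 2) * (G x y * v y) := rfl
    rw [hhy]
    have h1 := (hGbd x y).2
    have h2 := (hCvb y)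
    have h3 := (hvpos y).le
    have h4 := (hGpos y).le
    have h5 := (Real.exp_pos (-(β / 2) * ‖y - a‖ ^ 2)).le
    rw [abs_le] at h2
    have hgv : G x y * v y ≤ Real.exp M * Cv := mul_le_mul h1 h2.2 h3 (Real.exp_pos M).le
    nlinarith [mul_le_mul_of_nonneg_left hgv h5]
  constructor
  · -- lower bound
    set k : Fin p → ℤ := fun i => ⌊a i⌋ with hk
    have hsub1 : ∫ y in cubeT p k, h y ≤ ∫ y, h y :=
      setIntegral_le_integral hint (Filter.Eventually.of_forall hnonneg)
    have hlow : ∀ y ∈ cubeT p k,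
        (Real.exp (-(β * p / 2)) * Real.exp (-M)) * v y ≤ h y := by
      intro y hy
      have hdist : ‖y - a‖ ^ 2 ≤ p := by
        apply normsq_le_of_abs_le
        intro i
        have h1 : y i - (k i : ℝ) ∈ Set.Icc (0:ℝ) 1 := (mem_cubeT.mp hy) i
        have h2 : ((k i : ℝ)) ≤ a i := Int.floor_le _
        have h3 : a i < (k i : ℝ) + 1 := Int.lt_floor_add_one _
        have h4 : (y - a) i = y i - a i := rfl
        rw [h4, abs_le]
        rw [Set.mem_Icc] at h1
        constructor <;> linarith [h1.1, h1.2]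
      have hq1 : Real.exp (-(β * p / 2)) ≤ Real.exp (-(β / 2) * ‖y - a‖ ^ 2) := by
        rw [Real.exp_le_exp]
        nlinarith [hβ.le]
      have hg1 := (hGbd x y).1
      have := (hvpos y).le
      have e1 := (Real.exp_pos (-(β * p / 2))).le
      have e2 := (Real.exp_pos (-M)).le
      have e3 := (Real.exp_pos (-(β / 2) * ‖y - a‖ ^ 2)).le
      have hhy : h y = Real.exp (-(β / 2) * ‖y - a‖ ^ 2) * (G x y * v y) := rfl
      rw [hhy]
      have s2 : Real.exp (-M) * v y ≤ G x y * v y := mul_le_mul_of_nonneg_right hg1 this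
      nlinarith [mul_le_mul_of_nonneg_right hq1 (mul_nonneg e2 this),
        mul_le_mul_of_nonneg_left s2 e3]
    have hIvT : IntegrableOn (fun y => (Real.exp (-(β * p / 2)) * Real.exp (-M)) * v y)
        (cubeT p k) := by
      exact (hv.continuousOn.integrableOn_compact (isCompact_cubeT k)).const_mul _
    have hstep : ∫ y in cubeT p k, (Real.exp (-(β * p / 2)) * Real.exp (-M)) * v y
        ≤ ∫ y in cubeT p k, h y :=
      setIntegral_mono_on hIvT (hint.integrableOn) (measurableSet_cubeT k) hlow
    have hval : ∫ y in cubeT p k, (Real.exp (-(β * p / 2)) * Real.exp (-M)) * v y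
        = Real.exp (-(β * p / 2)) * Real.exp (-M) := by
      rw [integral_const_mul, setIntegral_cubeT v hvper k, hvnorm, mul_one]
    linarith [hval ▸ hstep, hsub1]
  · -- upper bound
    have heq : ∫ y, h y = (∫⁻ y, ENNReal.ofReal (h y)).toReal := by
      rw [integral_eq_lintegral_of_nonneg_ae (Filter.Eventually.of_forall hnonneg)
        hmeas.aestronglyMeasurable]
    rw [heq]
    apply ENNReal.toReal_le_of_le_ofReal (by positivity)
    set Fv : EuclideanSpace ℝ (Fin p) → ℝ≥0∞ := fun y => ENNReal.ofReal (v y) with hFv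
    set F2 : EuclideanSpace ℝ (Fin p) → ℝ≥0∞ :=
      fun y => ENNReal.ofReal (Real.exp (-(β / 2) * ‖y - a‖ ^ 2)) with hF2
    set F4 : EuclideanSpace ℝ (Fin p) → ℝ≥0∞ :=
      fun z => ENNReal.ofReal (Real.exp (-(β / 4) * ‖z - a‖ ^ 2)) with hF4
    have hFvm : Measurable Fv := ENNReal.measurable_ofReal.comp hv.measurable
    have hq4 : Continuous (fun z : EuclideanSpace ℝ (Fin p) =>
        Real.exp (-(β / 4) * ‖z - a‖ ^ 2)) :=
      (continuous_const.mul (((continuous_id.sub continuous_const).norm.pow 2))).rexp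
    have hF4m : Measurable F4 := ENNReal.measurable_ofReal.comp hq4.measurable
    -- step 1: remove G
    have step1 : ∫⁻ y, ENNReal.ofReal (h y)
        ≤ ENNReal.ofReal (Real.exp M) * ∫⁻ y, Fv y * F2 y := by
      rw [← lintegral_const_mul' _ _ ENNReal.ofReal_ne_top]
      apply lintegral_mono
      intro y
      have hb : h y ≤ Real.exp M * (v y * Real.exp (-(β / 2) * ‖y - a‖ ^ 2)) := by
        have h1 := (hGbd x y).2
        have h3 := (hvpos y).le
        have h5 := (Real.exp_pos (-(β / 2) * ‖y - a‖ ^ 2)).le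
        have hhy : h y = Real.exp (-(β / 2) * ‖y - a‖ ^ 2) * (G x y * v y) := rfl
        rw [hhy]
        nlinarith [mul_le_mul_of_nonneg_left (mul_le_mul_of_nonneg_right h1 h3) h5]
      calc ENNReal.ofReal (h y)
          ≤ ENNReal.ofReal (Real.exp M * (v y * Real.exp (-(β / 2) * ‖y - a‖ ^ 2))) :=
            ENNReal.ofReal_le_ofReal hb
        _ = ENNReal.ofReal (Real.exp M) * (Fv y * F2 y) := by
            rw [ENNReal.ofReal_mul (Real.exp_pos M).le,
              ENNReal.ofReal_mul (hvpos y).le]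
    -- step 2: smoothing
    have step2 : ∀ y, F2 y ≤ ENNReal.ofReal (Real.exp (β * p / 2))
        * ∫⁻ t in unitCube p, F4 (y + t) := by
      intro y
      have hA : ENNReal.ofReal (Real.exp (-(β * p / 2))) * F2 y
          ≤ ∫⁻ t in unitCube p, F4 (y + t) := by
        have hc : ∫⁻ _t in unitCube p,
            (ENNReal.ofReal (Real.exp (-(β * p / 2))) * F2 y)
            = ENNReal.ofReal (Real.exp (-(β * p / 2))) * F2 y := by
          rw [setLIntegral_const, volume_unitCube, mul_one]
        rw [← hc]
        apply setLIntegral_mono (hF4m.comp (measurable_const.add measurable_id))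
        intro t ht
        rw [hF2, ← ENNReal.ofReal_mul (Real.exp_pos _).le]
        exact ENNReal.ofReal_le_ofReal (by
          simpa using smooth_bound' hβ a y t ht)
      calc F2 y = ENNReal.ofReal (Real.exp (β * p / 2))
            * (ENNReal.ofReal (Real.exp (-(β * p / 2))) * F2 y) := by
            rw [← mul_assoc, ← ENNReal.ofReal_mul (Real.exp_pos _).le,
              ← Real.exp_add]
            norm_num
        _ ≤ _ := mul_le_mul_right hA _
    -- step 3
    have step3 : ∫⁻ y, Fv y * F2 y
        ≤ ENNReal.ofReal (Real.exp (β * p / 2))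
          * ∫⁻ y, ∫⁻ t in unitCube p, Fv y * F4 (y + t) := by
      rw [← lintegral_const_mul' _ _ ENNReal.ofReal_ne_top]
      apply lintegral_mono
      intro y
      calc Fv y * F2 y
          ≤ Fv y * (ENNReal.ofReal (Real.exp (β * p / 2))
              * ∫⁻ t in unitCube p, F4 (y + t)) :=
            mul_le_mul_right (step2 y) _
        _ = ENNReal.ofReal (Real.exp (β * p / 2))
              * (Fv y * ∫⁻ t in unitCube p, F4 (y + t)) := by ring
        _ = ENNReal.ofReal (Real.exp (β * p / 2))
              * ∫⁻ t in unitCube p, Fv y * F4 (y + t) := by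
            rw [lintegral_const_mul' (Fv y) _ ENNReal.ofReal_ne_top]
    -- step 4: swap
    have step4 : ∫⁻ y, ∫⁻ t in unitCube p, Fv y * F4 (y + t)
        = ∫⁻ t in unitCube p, ∫⁻ y, Fv y * F4 (y + t) := by
      apply lintegral_lintegral_swap
      apply Measurable.aemeasurable
      refine Measurable.mul (f := fun z : EuclideanSpace ℝ (Fin p) × EuclideanSpace ℝ (Fin p) => Fv z.1)
        (g := fun z => F4 (z.1 + z.2)) ?_ ?_
      · exact hFvm.comp measurable_fst
      · exact hF4m.comp (measurable_fst.add measurable_snd)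
    -- step 5: translation
    have step5 : ∀ t : EuclideanSpace ℝ (Fin p),
        ∫⁻ y, Fv y * F4 (y + t) = ∫⁻ w, ENNReal.ofReal (v (w - t)) * F4 w := by
      intro t
      have h := (measurePreserving_add_right
        (volume : Measure (EuclideanSpace ℝ (Fin p))) t).lintegral_comp_emb
        ((MeasurableEquiv.addRight t).measurableEmbedding)
        (fun w => ENNReal.ofReal (v (w - t)) * F4 w)
      rw [← h]
      congr 1
      funext y
      simp only [add_sub_cancel_right]
      rfl
    -- step 6: swap back
    have step6 : ∫⁻ t in unitCube p, ∫⁻ w, ENNReal.ofReal (v (w - t)) * F4 w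
        = ∫⁻ w, ∫⁻ t in unitCube p, ENNReal.ofReal (v (w - t)) * F4 w := by
      apply lintegral_lintegral_swap
      apply Measurable.aemeasurable
      refine Measurable.mul
        (f := fun z : EuclideanSpace ℝ (Fin p) × EuclideanSpace ℝ (Fin p) => ENNReal.ofReal (v (z.2 - z.1)))
        (g := fun z => F4 z.2) ?_ ?_
      · exact ENNReal.measurable_ofReal.comp
          (hv.measurable.comp (measurable_snd.sub measurable_fst))
      · exact hF4m.comp measurable_snd
    -- step 7+8: inner bound and Gaussian integral
    have step7 : ∫⁻ w, ∫⁻ t in unitCube p, ENNReal.ofReal (v (w - t)) * F4 w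
        ≤ (2 : ℝ≥0∞) ^ p * ENNReal.ofReal ((Real.pi / (β / 4)) ^ ((p : ℝ) / 2)) := by
      have hptw : ∀ w, ∫⁻ t in unitCube p, ENNReal.ofReal (v (w - t)) * F4 w
          ≤ F4 w * 2 ^ p := by
        intro w
        rw [lintegral_mul_const' (F4 w) _ ENNReal.ofReal_ne_top, mul_comm]
        exact mul_le_mul_right (cover_bound hv (fun z => (hvpos z).le) hvper hvnorm w) _
      calc ∫⁻ w, ∫⁻ t in unitCube p, ENNReal.ofReal (v (w - t)) * F4 w
          ≤ ∫⁻ w, F4 w * 2 ^ p := lintegral_mono hptw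
        _ = (∫⁻ w, F4 w) * 2 ^ p := lintegral_mul_const' _ _ (by simp)
        _ = (2 : ℝ≥0∞) ^ p * ENNReal.ofReal ((Real.pi / (β / 4)) ^ ((p : ℝ) / 2)) := by
            rw [hF4, gauss_lintegral (by linarith) a, mul_comm]
    -- combine
    have hfinal : ∫⁻ y, ENNReal.ofReal (h y)
        ≤ ENNReal.ofReal (Real.exp M) * (ENNReal.ofReal (Real.exp (β * p / 2))
          * ((2 : ℝ≥0∞) ^ p * ENNReal.ofReal ((Real.pi / (β / 4)) ^ ((p : ℝ) / 2)))) := by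
      refine le_trans step1 (mul_le_mul_right ?_ _)
      refine le_trans step3 (mul_le_mul_right ?_ _)
      calc ∫⁻ y, ∫⁻ t in unitCube p, Fv y * F4 (y + t)
          = ∫⁻ t in unitCube p, ∫⁻ y, Fv y * F4 (y + t) := step4
        _ = ∫⁻ t in unitCube p, ∫⁻ w, ENNReal.ofReal (v (w - t)) * F4 w := by
            apply setLIntegral_congr_fun measurableSet_unitCube
            exact fun t _ => step5 t
        _ = ∫⁻ w, ∫⁻ t in unitCube p, ENNReal.ofReal (v (w - t)) * F4 w := step6
        _ ≤ _ := step7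
    refine le_trans hfinal (le_of_eq ?_)
    rw [ENNReal.ofReal_mul (Real.exp_pos M).le, ENNReal.ofReal_mul (Real.exp_pos _).le,
      ENNReal.ofReal_mul (by positivity)]
    congr 2
    rw [show ((2:ℝ)^p : ℝ) = ((2:ℝ))^p from rfl, ENNReal.ofReal_pow (by norm_num)]
    norm_num

end Stmt5Aux

/-- uniform two-sided bounds for `L v`, for all admissible kernels `G` and
all continuous positive periodic normalized `v`. -/
theorem stmt5 (p : ℕ) (hp : 1 ≤ p) (β : ℝ) (hβ : 0 < β)
    (c : EuclideanSpace ℝ (Fin p)) (M : ℝ) (hM : 0 ≤ M) :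
    ∃ C₅ C₇ : ℝ, 0 < C₅ ∧ C₅ ≤ C₇ ∧
      ∀ G : EuclideanSpace ℝ (Fin p) → EuclideanSpace ℝ (Fin p) → ℝ,
        Measurable (Function.uncurry G) →
        (∀ x y, Real.exp (-M) ≤ G x y ∧ G x y ≤ Real.exp M) →
        (∀ x y (k : Fin p → ℤ), G (x + intVec p k) (y + intVec p k) = G x y) →
        ∀ v : EuclideanSpace ℝ (Fin p) → ℝ, Continuous v → (∀ x, 0 < v x) →
          (∀ x (k : Fin p → ℤ), v (x + intVec p k) = v x) →
          (∫ x in unitCube p, v x) = 1 →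
          (∀ x, C₅ ≤ twistedKernelOp p β c G v x ∧ twistedKernelOp p β c G v x ≤ C₇) ∧
          sSup (Set.range (twistedKernelOp p β c G v)) /
              sInf (Set.range (twistedKernelOp p β c G v)) ≤ C₇ / C₅ := by
  have hpref : (0:ℝ) < (β / (2 * Real.pi)) ^ ((p : ℝ) / 2) :=
    Real.rpow_pos_of_pos (by positivity) _
  set pref : ℝ := (β / (2 * Real.pi)) ^ ((p : ℝ) / 2) with hprefdef
  set K : ℝ := Real.exp (β * ‖c‖ ^ 2 / 2) with hK
  set lo : ℝ := Real.exp (-(β * p / 2)) * Real.exp (-M) with hlo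
  set up : ℝ := Real.exp M * (Real.exp (β * p / 2)
    * (2 ^ p * (Real.pi / (β / 4)) ^ ((p : ℝ) / 2))) with hup
  have hKpos : 0 < K := Real.exp_pos _
  have hlopos : 0 < lo := by positivity
  have hC5pos : 0 < pref * (K * lo) := by positivity
  refine ⟨pref * (K * lo), max (pref * (K * lo)) (pref * (K * up)), hC5pos,
    le_max_left _ _, ?_⟩
  intro G hGmeas hGbd hGper v hv hvpos hvper hvnorm
  have hbound : ∀ x, pref * (K * lo) ≤ twistedKernelOp p β c G v x ∧
      twistedKernelOp p β c G v x ≤ max (pref * (K * lo)) (pref * (K * up)) := by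
    intro x
    have hcore := Stmt5Aux.core_bound p β hβ M G hGmeas hGbd v hv hvpos hvper hvnorm
      x (x + c)
    have key : ∀ y : EuclideanSpace ℝ (Fin p),
        Real.exp (-(β / 2) * ‖y - x‖ ^ 2) * Real.exp (β * ⟪c, y - x⟫)
          = K * Real.exp (-(β / 2) * ‖y - (x + c)‖ ^ 2) := by
      intro y
      rw [hK, ← Real.exp_add, ← Real.exp_add]
      congr 1
      have hy : y - (x + c) = (y - x) - c := by abel
      rw [hy, norm_sub_sq_real (y - x) c, real_inner_comm c (y - x)]
      ring
    have heq : twistedKernelOp p β c G v x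
        = pref * (K * ∫ y, Real.exp (-(β / 2) * ‖y - (x + c)‖ ^ 2) * (G x y * v y)) := by
      unfold twistedKernelOp
      rw [← hprefdef]
      congr 1
      rw [← integral_const_mul]
      congr 1
      funext y
      rw [show Real.exp (-(β / 2) * ‖y - x‖ ^ 2) * Real.exp (β * ⟪c, y - x⟫) * G x y * v y
          = (Real.exp (-(β / 2) * ‖y - x‖ ^ 2) * Real.exp (β * ⟪c, y - x⟫))
            * (G x y * v y) by ring, key y]
      ring
    rw [heq]
    constructor
    · exact mul_le_mul_of_nonneg_left
        (mul_le_mul_of_nonneg_left hcore.1 hKpos.le) hpref.le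
    · refine le_trans (mul_le_mul_of_nonneg_left
        (mul_le_mul_of_nonneg_left hcore.2 hKpos.le) hpref.le) (le_max_right _ _)
  refine ⟨hbound, ?_⟩
  have hne : (Set.range (twistedKernelOp p β c G v)).Nonempty :=
    ⟨twistedKernelOp p β c G v 0, 0, rfl⟩
  have h1 : sSup (Set.range (twistedKernelOp p β c G v))
      ≤ max (pref * (K * lo)) (pref * (K * up)) := by
    apply csSup_le hne
    rintro z ⟨x, rfl⟩
    exact (hbound x).2
  have h2 : pref * (K * lo) ≤ sInf (Set.range (twistedKernelOp p β c G v)) := by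
    apply le_csInf hne
    rintro z ⟨x, rfl⟩
    exact (hbound x).1
  exact div_le_div₀ (le_trans hC5pos.le (le_max_left _ _)) h1 hC5pos h2
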